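/- For A = (γ'·γ̂)/|γ'|_G and B = (γ'·γ̂)/|γ'| defined along a pair (γ, γ') ∈ (ℝ^d∖{0})² with the metric G(x) = P + P_⊥GP_⊥ and a|y|² ≤ yGy ≤ b|y|², the inequalities b(1−B²) ≥ 1−A² and a^{-1}(1−A²) ≥ 1−B² hold. -/

import Mathlib

set_option maxHeartbeats 1000000

/-- The rank-one projection `P(x̂) = |x̂⟩⟨x̂|` as a matrix: entries `x_i x_j / |x|²`. -/
noncomputable def projMat (d : ℕ) (x : Fin d → ℝ) : Matrix (Fin d) (Fin d) ℝ :=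
  Matrix.of fun i j => x i * x j / (∑ k, x k ^ 2)

/-- `A = (γ'·γ̂)/|γ'|_G` where `|γ'|_G = √(γ'·G(γ)γ')`. -/
noncomputable def AObs (d : ℕ) (G : (Fin d → ℝ) → Matrix (Fin d) (Fin d) ℝ)
    (γ γ' : Fin d → ℝ) : ℝ :=
  (∑ i, γ' i * γ i) /
    (Real.sqrt (∑ i, γ i ^ 2) * Real.sqrt (dotProduct γ' ((G γ).mulVec γ')))

/-- `B = (γ'·γ̂)/|γ'|`. -/
noncomputable def BObs (d : ℕ) (γ γ' : Fin d → ℝ) : ℝ :=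
  (∑ i, γ' i * γ i) / (Real.sqrt (∑ i, γ i ^ 2) * Real.sqrt (∑ i, γ' i ^ 2))

/-- For the observables `A` and `B`: `b(1−B²) ≥ 1−A²` and `a⁻¹(1−A²) ≥ 1−B²`. -/
theorem stmt_15 (d : ℕ) (hd : 2 ≤ d) (a b : ℝ) (ha : 0 < a) (ha1 : a ≤ 1) (hb : 1 ≤ b)
    (G : (Fin d → ℝ) → Matrix (Fin d) (Fin d) ℝ)
    (hGsymm : ∀ z, (G z).IsSymm)
    (hell : ∀ z y : Fin d → ℝ,
      a * ∑ i, y i ^ 2 ≤ dotProduct y ((G z).mulVec y) ∧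
      dotProduct y ((G z).mulVec y) ≤ b * ∑ i, y i ^ 2)
    (hdec : ∀ z : Fin d → ℝ, z ≠ 0 →
      G z = projMat d z + (1 - projMat d z) * G z * (1 - projMat d z))
    (γ γ' : Fin d → ℝ) (hγ : γ ≠ 0) (hγ' : γ' ≠ 0) :
    1 - (AObs d G γ γ') ^ 2 ≤ b * (1 - (BObs d γ γ') ^ 2) ∧
    1 - (BObs d γ γ') ^ 2 ≤ a⁻¹ * (1 - (AObs d G γ γ') ^ 2) := by
  have hSpos : 0 < ∑ i, γ i ^ 2 := by
    obtain ⟨i, hi⟩ := Function.ne_iff.mp hγ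
    exact Finset.sum_pos' (fun j _ => sq_nonneg _) ⟨i, Finset.mem_univ i, by
      have : γ i ≠ 0 := by simpa using hi
      positivity⟩
  have hTpos : 0 < ∑ i, γ' i ^ 2 := by
    obtain ⟨i, hi⟩ := Function.ne_iff.mp hγ'
    exact Finset.sum_pos' (fun j _ => sq_nonneg _) ⟨i, Finset.mem_univ i, by
      have : γ' i ≠ 0 := by simpa using hi
      positivity⟩
  set S := ∑ i, γ i ^ 2 with hS
  set T := ∑ i, γ' i ^ 2 with hT
  set c := ∑ i, γ' i * γ i with hc
  set P := projMat d γ with hPdef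
  have hPsymm : P.transpose = P := by
    ext i j
    simp only [hPdef, projMat, Matrix.transpose_apply, Matrix.of_apply]
    ring
  set w := ((1 : Matrix (Fin d) (Fin d) ℝ) - P).mulVec γ' with hwdef
  have hPmul : ∀ i, P.mulVec γ' i = γ i * c / S := by
    intro i
    show ∑ j, P i j * γ' j = _
    have h1 : ∀ j, P i j * γ' j = (γ' j * γ j) * γ i / S := by
      intro j
      simp only [hPdef, projMat, Matrix.of_apply, ← hS]
      ring
    rw [Finset.sum_congr rfl fun j _ => h1 j, ← Finset.sum_div, ← Finset.sum_mul, ← hc]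
    ring
  have hwi : ∀ i, w i = γ' i - γ i * c / S := by
    intro i
    rw [hwdef, Matrix.sub_mulVec]
    simp only [Matrix.one_mulVec, Pi.sub_apply, hPmul i]
  have hwsq : ∑ i, w i ^ 2 = T - c ^ 2 / S := by
    have h1 : ∀ i, w i ^ 2
        = γ' i ^ 2 - (2 * c / S) * (γ' i * γ i) + (c / S) ^ 2 * γ i ^ 2 := by
      intro i; rw [hwi i]; ring
    rw [Finset.sum_congr rfl fun i _ => h1 i, Finset.sum_add_distrib,
      Finset.sum_sub_distrib, ← Finset.mul_sum, ← Finset.mul_sum, ← hc, ← hT, ← hS]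
    field_simp
    ring
  set Q := dotProduct γ' ((G γ).mulVec γ') with hQdef
  set R := dotProduct w ((G γ).mulVec w) with hRdef
  have hP1symm : ((1 : Matrix (Fin d) (Fin d) ℝ) - P).transpose = 1 - P := by
    rw [Matrix.transpose_sub, Matrix.transpose_one, hPsymm]
  have hQ : Q = c ^ 2 / S + R := by
    rw [hQdef, hRdef]
    conv_lhs => rw [hdec γ hγ]
    rw [← hPdef, Matrix.add_mulVec, dotProduct_add]
    congr 1
    · have h1 : ∀ i, γ' i * P.mulVec γ' i = (γ' i * γ i) * c / S := by
        intro i; rw [hPmul i]; ring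
      show ∑ i, γ' i * P.mulVec γ' i = _
      rw [Finset.sum_congr rfl fun i _ => h1 i, ← Finset.sum_div, ← Finset.sum_mul, ← hc]
      ring
    · rw [← Matrix.mulVec_mulVec, ← Matrix.mulVec_mulVec, Matrix.dotProduct_mulVec,
        ← Matrix.mulVec_transpose, hP1symm, ← hwdef]
  have hRl : a * (T - c ^ 2 / S) ≤ R := by
    have h := (hell γ w).1
    rwa [hwsq] at h
  have hRu : R ≤ b * (T - c ^ 2 / S) := by
    have h := (hell γ w).2
    rwa [hwsq] at h
  have hmnn : 0 ≤ T - c ^ 2 / S := by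
    rw [← hwsq]; positivity
  have hunn : 0 ≤ c ^ 2 / S := by positivity
  have hQpos : 0 < Q := by
    have h := (hell γ γ').1
    rw [← hT, ← hQdef] at h
    exact lt_of_lt_of_le (by positivity : (0:ℝ) < a * T) h
  have hAeq : AObs d G γ γ' = c / (Real.sqrt S * Real.sqrt Q) := by
    simp only [AObs, ← hS, ← hc, ← hQdef]
  have hBeq : BObs d γ γ' = c / (Real.sqrt S * Real.sqrt T) := by
    simp only [BObs, ← hS, ← hc, ← hT]
  have hSQ : S * Q = c ^ 2 + S * R := by
    rw [hQ]; field_simp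
  have h1A : 1 - AObs d G γ γ' ^ 2 = R / Q := by
    rw [hAeq, div_pow, mul_pow, Real.sq_sqrt hSpos.le, Real.sq_sqrt hQpos.le]
    field_simp
    linear_combination hSQ
  have h1B : 1 - BObs d γ γ' ^ 2 = (T - c ^ 2 / S) / T := by
    rw [hBeq, div_pow, mul_pow, Real.sq_sqrt hSpos.le, Real.sq_sqrt hTpos.le]
    field_simp
  rw [h1A, h1B]
  have hRnn : 0 ≤ R := le_trans (by positivity) hRl
  constructor
  · rw [← mul_div_assoc, div_le_div_iff₀ hQpos hTpos, hQ]
    nlinarith [mul_nonneg (sub_nonneg.mpr hRu) hunn,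
      mul_nonneg (sub_nonneg.mpr hb) (mul_nonneg hRnn hmnn)]
  · have h2 : a * ((T - c ^ 2 / S) / T) ≤ R / Q := by
      rw [← mul_div_assoc, div_le_div_iff₀ hTpos hQpos, hQ]
      nlinarith [mul_nonneg (sub_nonneg.mpr hRl) hunn,
        mul_nonneg (sub_nonneg.mpr ha1) (mul_nonneg hRnn hmnn)]
    calc (T - c ^ 2 / S) / T = a⁻¹ * (a * ((T - c ^ 2 / S) / T)) := by
          field_simp
      _ ≤ a⁻¹ * (R / Q) := by
          exact mul_le_mul_of_nonneg_left h2 (by positivity)
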